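/- Bypass theorem: if G''^{g''} ∈ G'^{g'} ∈ G^g and G''^{g''} = G^g (equivalent), then G^g is equivalent to the game ((G \ {G'^{g'}}) ∪ G'')^g obtained by removing the reversible option G'^{g'} and adding all options of G'^{g'}'s option G''^{g''}. -/
import Mathlib


inductive AGame : Type where
  | mk : List AGame → Bool → AGame

namespace AGame

noncomputable instance : DecidableEq AGame := Classical.decEq _

def opts : AGame → List AGame | mk gs _ => gs
def act : AGame → Bool | mk _ g => g

theorem sizeOf_lt_of_mem {G G' : AGame} (h : G' ∈ G.opts) : sizeOf G' < sizeOf G := by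
  cases G with
  | mk gs g =>
    simp only [opts] at h
    have := List.sizeOf_lt_of_mem h
    simp [AGame.mk.sizeOf_spec]
    omega

/-- Disjunctive sum of games with activeness. -/
def add (G H : AGame) : AGame :=
  mk (G.opts.attach.map (fun x => add x.1 H) ++
      H.opts.attach.map (fun y => add G y.1)) (G.act || H.act)
termination_by sizeOf G + sizeOf H
decreasing_by
  · have := sizeOf_lt_of_mem x.2; omega
  · have := sizeOf_lt_of_mem y.2; omega

/-- `PPos G` means the outcome of `G` is 𝒫 (second player wins). -/
def PPos (G : AGame) : Prop :=
  G.act = false ∨ ∀ G' ∈ G.opts.attach, ¬ PPos G'.1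
termination_by sizeOf G
decreasing_by
  have := sizeOf_lt_of_mem G'.2; omega

/-- Hereditary set-equality (the paper's ≅). -/
def Identical (G H : AGame) : Prop :=
  G.act = H.act ∧ (∀ G' ∈ G.opts.attach, ∃ H' ∈ H.opts.attach, Identical G'.1 H'.1)
              ∧ (∀ H' ∈ H.opts.attach, ∃ G' ∈ G.opts.attach, Identical G'.1 H'.1)
termination_by sizeOf G + sizeOf H
decreasing_by
  · have := sizeOf_lt_of_mem G'.2; have := sizeOf_lt_of_mem H'.2; omega
  · have := sizeOf_lt_of_mem G'.2; have := sizeOf_lt_of_mem H'.2; omega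

/-- Equivalence of games with activeness: same outcome in every sum. -/
def Equiv (G H : AGame) : Prop := ∀ X : AGame, (PPos (add G X) ↔ PPos (add H X))

end AGame

namespace AGame

/-- Nimbers with activeness: `star γ n ≅ {star γ j : j < n}^{γ n}`. -/
def star (γ : ℕ → Bool) : ℕ → AGame
  | n => mk ((List.range n).attach.map (fun j => star γ j.1)) (γ n)
termination_by n => n
decreasing_by
  have := j.2; simp [List.mem_range] at this; omega

/-- The generalized Grundy set `𝒢^γ(G)`. -/
def GSet (γ : ℕ → Bool) (G : AGame) : Set ℕ := {n | PPos (add G (star γ n))}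

/-- Minimum excludant of a set of naturals. -/
noncomputable def mex (S : Set ℕ) : ℕ := sInf {n | n ∉ S}

/-- Ordinary Grundy value, computed ignoring activeness. -/
noncomputable def grundy (G : AGame) : ℕ :=
  mex {m | ∃ G' ∈ G.opts.attach, grundy G'.1 = m}
termination_by sizeOf G
decreasing_by
  have := sizeOf_lt_of_mem G'.2; omega

/-- The three types of games with activeness. -/
inductive AType : Type where
  | inactive : AType            -- type 0
  | activeSomeInactive : AType  -- type 1_{∃0}
  | activeAllActive : AType     -- type 1_{∀1}

open Classical in
/-- `type(G^g)`. -/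
noncomputable def typ (G : AGame) : AType :=
  if G.act = false then .inactive
  else if ∃ G' ∈ G.opts, G'.act = false then .activeSomeInactive
  else .activeAllActive

/-- Formal birthday `b(G)`. -/
def bday (G : AGame) : ℕ :=
  (G.opts.attach.map (fun G' => bday G'.1 + 1)).foldr max 0
termination_by sizeOf G
decreasing_by
  have := sizeOf_lt_of_mem G'.2; omega

/-- An option `G'` of `G` is reversible if it has an option equivalent to `G`. -/
def Reversible (G G' : AGame) : Prop := ∃ G'' ∈ G'.opts, Equiv G'' G

/-- A canonical game: all options canonical and no option reversible. -/
def Canonical (G : AGame) : Prop :=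
  (∀ G' ∈ G.opts.attach, Canonical G'.1) ∧ (∀ G' ∈ G.opts, ¬ Reversible G G')
termination_by sizeOf G
decreasing_by
  have := sizeOf_lt_of_mem G'.2; omega

/-- A transitive game: all options transitive and options of options are options. -/
def TransGame (G : AGame) : Prop :=
  (∀ G' ∈ G.opts.attach, TransGame G'.1) ∧ (∀ G' ∈ G.opts, ∀ G'' ∈ G'.opts, G'' ∈ G.opts)
termination_by sizeOf G
decreasing_by
  have := sizeOf_lt_of_mem G'.2; omega

/-- `G` is covered by `H` if every option of `G` is equivalent to some option of `H`. -/
def Covered (G H : AGame) : Prop := ∀ G' ∈ G.opts, ∃ H' ∈ H.opts, Equiv G' H'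

/-- The relation `G ⋈ H`. -/
def Bowtie (G H : AGame) : Prop :=
  (∀ G' ∈ G.opts, ¬ Equiv G' H) ∧ (∀ H' ∈ H.opts, ¬ Equiv G H')

/-- The linear chain `∅^{g₀ g₁ … gₙ}`. -/
def chain (g : ℕ → Bool) : ℕ → AGame
  | 0 => mk [] (g 0)
  | n + 1 => mk [chain g n] (g (n + 1))

end AGame
namespace AGame

theorem sizeOf_pos (G : AGame) : 0 < sizeOf G := by
  cases G; simp [AGame.mk.sizeOf_spec]

theorem add_def (G H : AGame) : add G H =
    mk (G.opts.attach.map (fun x => add x.1 H) ++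
        H.opts.attach.map (fun y => add G y.1)) (G.act || H.act) := by
  rw [add]

theorem act_add (G H : AGame) : (add G H).act = (G.act || H.act) := by
  rw [add_def]; rfl

theorem mem_opts_add {G H Y : AGame} : Y ∈ (add G H).opts ↔
    (∃ G' ∈ G.opts, Y = add G' H) ∨ ∃ H' ∈ H.opts, Y = add G H' := by
  rw [add_def]
  simp only [opts, List.mem_append, List.mem_map, List.mem_attach, true_and,
    Subtype.exists, eq_comm, exists_prop]

theorem ppos_def (G : AGame) : PPos G ↔ (G.act = false ∨ ∀ G' ∈ G.opts, ¬ PPos G') := by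
  rw [PPos]
  simp only [List.mem_attach, true_implies, Subtype.forall]

theorem ppos_inactive {G : AGame} (h : G.act = false) : PPos G :=
  (ppos_def G).mpr (Or.inl h)

theorem ppos_active {G : AGame} (h : G.act = true) :
    PPos G ↔ ∀ G' ∈ G.opts, ¬ PPos G' := by
  rw [ppos_def, h]; simp

end AGame
namespace AGame

theorem bypass_aux (gs : List AGame) (g : Bool) (G' G'' : AGame)
    (h1 : G' ∈ gs) (h2 : G'' ∈ G'.opts) (h3 : Equiv G'' (mk gs g)) :
    ∀ X : AGame, PPos (add (mk gs g) X) ↔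
      PPos (add (mk ((gs.filter (fun x => x ≠ G')) ++ G''.opts) g) X) := by
  set A : AGame := mk gs g with hA
  set B : AGame := mk ((gs.filter (fun x => x ≠ G')) ++ G''.opts) g with hB
  have hAact : A.act = g := rfl
  have hBact : B.act = g := rfl
  have hAopts : A.opts = gs := rfl
  have hBopts : B.opts = gs.filter (fun x => x ≠ G') ++ G''.opts := rfl
  have key : ¬ (g = true ∧ G''.act = false) := by
    rintro ⟨hg, hGa⟩
    have p2 : ¬ PPos (add A (mk [] false)) := by
      have p1 : PPos (add A (mk [mk [] false] false)) :=
        (h3 _).mp (ppos_inactive (by rw [act_add, hGa]; rfl))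
      have := (ppos_active (G := add A (mk [mk [] false] false))
        (by rw [act_add, hAact, hg]; rfl)).mp p1
      exact this _ (mem_opts_add.mpr (Or.inr ⟨mk [] false, by simp [opts], rfl⟩))
    exact p2 ((h3 _).mp (ppos_inactive (by rw [act_add, hGa]; rfl)))
  suffices h : ∀ n (X : AGame), sizeOf X ≤ n → (PPos (add A X) ↔ PPos (add B X)) from
    fun X => h _ X le_rfl
  intro n
  induction n with
  | zero => intro X hX; have := sizeOf_pos X; omega
  | succ n ih =>
    intro X hX
    have actA : (add A X).act = (g || X.act) := by rw [act_add, hAact]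
    have actB : (add B X).act = (g || X.act) := by rw [act_add, hBact]
    have ihX : ∀ X' ∈ X.opts, (PPos (add A X') ↔ PPos (add B X')) := fun X' hX' =>
      ih X' (by have := sizeOf_lt_of_mem hX'; omega)
    by_cases hact : (g || X.act) = true
    · constructor
      · intro hPA
        have hall : ∀ Y ∈ (add A X).opts, ¬ PPos Y :=
          (ppos_active (actA.trans hact)).mp hPA
        have hG''X : PPos (add G'' X) := (h3 X).mpr hPA
        rw [ppos_active (actB.trans hact)]
        intro Y hY
        rcases mem_opts_add.mp hY with ⟨Bi, hBi, rfl⟩ | ⟨X', hX', rfl⟩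
        · rw [hBopts, List.mem_append] at hBi
          rcases hBi with hBi | hBi
          · exact hall _ (mem_opts_add.mpr
              (Or.inl ⟨Bi, by rw [hAopts]; exact (List.mem_filter.mp hBi).1, rfl⟩))
          · by_cases hga : (G''.act || X.act) = true
            · exact (ppos_active (G := add G'' X) (by rw [act_add]; exact hga)).mp hG''X _
                (mem_opts_add.mpr (Or.inl ⟨Bi, hBi, rfl⟩))
            · exfalso
              apply key
              simp only [Bool.or_eq_true, not_or, Bool.not_eq_true] at hga
              refine ⟨?_, hga.1⟩
              rcases Bool.or_eq_true _ _ |>.mp hact with h | h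
              · exact h
              · rw [hga.2] at h; exact absurd h (by simp)
        · intro hP
          exact hall _ (mem_opts_add.mpr (Or.inr ⟨X', hX', rfl⟩)) ((ihX X' hX').mpr hP)
      · intro hPB
        have hall : ∀ Y ∈ (add B X).opts, ¬ PPos Y :=
          (ppos_active (actB.trans hact)).mp hPB
        have hG''X : PPos (add G'' X) := by
          by_cases hga : (G''.act || X.act) = true
          · rw [ppos_active (G := add G'' X) (by rw [act_add]; exact hga)]
            intro Y hY
            rcases mem_opts_add.mp hY with ⟨Bj, hBj, rfl⟩ | ⟨X', hX', rfl⟩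
            · exact hall _ (mem_opts_add.mpr
                (Or.inl ⟨Bj, by rw [hBopts]; exact List.mem_append_right _ hBj, rfl⟩))
            · intro hP
              exact hall _ (mem_opts_add.mpr (Or.inr ⟨X', hX', rfl⟩))
                ((ihX X' hX').mp ((h3 X').mp hP))
          · exact ppos_inactive (by rw [act_add]; simpa using hga)
        exact (h3 X).mp hG''X
    · have hact' : (g || X.act) = false := by simpa using hact
      constructor
      · intro _; exact ppos_inactive (actB.trans hact')
      · intro _; exact ppos_inactive (actA.trans hact')

end AGame

/-- Bypass theorem: bypassing a reversible option yields an equivalent game. -/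
theorem AGame.bypass (gs : List AGame) (g : Bool) (G' G'' : AGame)
    (h1 : G' ∈ gs) (h2 : G'' ∈ G'.opts) (h3 : AGame.Equiv G'' (AGame.mk gs g)) :
    AGame.Equiv (AGame.mk gs g)
      (AGame.mk ((gs.filter (fun x => x ≠ G')) ++ G''.opts) g) :=
  AGame.bypass_aux gs g G' G'' h1 h2 h3
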